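/- Let 0 < α ≤ 1 and let h belong to the class G(α). Then the Schwarzian derivative of h satisfies (1 − |z|²)²·|S_h(z)| ≤ 2α(2 + α) for every z in the open unit disk 𝔻, i.e. ‖S_h‖ ≤ 2α(2 + α). -/

import Mathlib

open Complex Metric

lemma mobius_den_ne {d u : ℂ} (hd : ‖d‖ < 1) (hu : ‖u‖ < 1) :
    1 + (starRingEnd ℂ) d * u ≠ 0 := by
  intro h
  have h1 : (starRingEnd ℂ) d * u = -1 := by linear_combination h
  have := congrArg (‖·‖) h1
  norm_num [norm_mul, Complex.norm_conj] at this
  nlinarith [norm_nonneg d, norm_nonneg u]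

lemma mobius_lt_one {d u : ℂ} (hd : ‖d‖ < 1) (hu : ‖u‖ < 1) :
    ‖(u + d) / (1 + (starRingEnd ℂ) d * u)‖ < 1 := by
  have hne := mobius_den_ne hd hu
  rw [norm_div, div_lt_one (norm_pos_iff.mpr hne)]
  refine lt_of_pow_lt_pow_left₀ 2 (norm_nonneg _) ?_
  rw [Complex.sq_norm, Complex.sq_norm, Complex.normSq_add, Complex.normSq_add]
  have h1 : ((1:ℂ) * (starRingEnd ℂ) ((starRingEnd ℂ) d * u)).re = (u * (starRingEnd ℂ) d).re := by
    rw [one_mul, map_mul, Complex.conj_conj, ← Complex.conj_re (u * (starRingEnd ℂ) d),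
      map_mul, Complex.conj_conj, mul_comm]
  have hd2 : Complex.normSq d < 1 := by
    rw [← Complex.sq_norm]; nlinarith [norm_nonneg d]
  have hu2 : Complex.normSq u < 1 := by
    rw [← Complex.sq_norm]; nlinarith [norm_nonneg u]
  rw [h1]
  simp only [Complex.normSq_one, Complex.normSq_mul, Complex.normSq_conj]
  nlinarith [Complex.normSq_nonneg d, Complex.normSq_nonneg u]

lemma abs_one_sub_conj_mul {b : ℂ} (hb : ‖b‖ < 1) :
    ‖1 - (starRingEnd ℂ) b * b‖ = 1 - ‖b‖ ^ 2 := by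
  have : (1 : ℂ) - (starRingEnd ℂ) b * b = ((1 - ‖b‖ ^ 2 : ℝ) : ℂ) := by
    rw [mul_comm, Complex.mul_conj, Complex.normSq_eq_norm_sq]
    push_cast
    ring
  rw [this, Complex.norm_real, Real.norm_eq_abs]
  exact abs_of_nonneg (by nlinarith [norm_nonneg b])

/-- The Schwarz–Pick lemma for self-maps of the unit disk (with closed-disk codomain). -/
lemma schwarz_pick {f : ℂ → ℂ} (hd : DifferentiableOn ℂ f (ball 0 1))
    (hm : ∀ z ∈ ball (0:ℂ) 1, ‖f z‖ ≤ 1) {a : ℂ} (ha : a ∈ ball (0:ℂ) 1) :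
    ‖deriv f a‖ * (1 - ‖a‖ ^ 2) ≤ 1 - ‖f a‖ ^ 2 := by
  by_cases hcon : ∀ z ∈ ball (0:ℂ) 1, ‖f z‖ < 1
  · have ha' : ‖a‖ < 1 := mem_ball_zero_iff.1 ha
    set b := f a with hb_def
    have hb : ‖b‖ < 1 := hcon a ha
    set σ : ℂ → ℂ := fun z => (z + a) / (1 + (starRingEnd ℂ) a * z) with hσ_def
    have hσmem : ∀ z ∈ ball (0:ℂ) 1, σ z ∈ ball (0:ℂ) 1 := fun z hz =>
      mem_ball_zero_iff.2 (mobius_lt_one ha' (mem_ball_zero_iff.1 hz))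
    have hσ0 : σ 0 = a := by simp [hσ_def]
    set g : ℂ → ℂ := fun z => (f (σ z) - b) / (1 - (starRingEnd ℂ) b * f (σ z)) with hg_def
    have hden2 : ∀ u : ℂ, ‖u‖ < 1 → 1 - (starRingEnd ℂ) b * u ≠ 0 := by
      intro u hu
      have := mobius_den_ne (d := -b) (u := u) (by simpa using hb) hu
      simpa [sub_eq_add_neg] using this
    have hgball : ∀ z ∈ ball (0:ℂ) 1, g z ∈ ball (0:ℂ) 1 := by
      intro z hz
      have hu : ‖f (σ z)‖ < 1 := hcon _ (hσmem z hz)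
      have := mobius_lt_one (d := -b) (u := f (σ z)) (by simpa using hb) hu
      rw [mem_ball_zero_iff]
      simpa [hg_def, sub_eq_add_neg] using this
    have hg0 : g 0 = 0 := by simp [hg_def, hσ0, ← hb_def]
    have hσd_at : ∀ z ∈ ball (0:ℂ) 1, DifferentiableAt ℂ σ z := by
      intro z hz
      have hne : 1 + (starRingEnd ℂ) a * z ≠ 0 :=
        mobius_den_ne ha' (mem_ball_zero_iff.1 hz)
      exact ((differentiableAt_id.add_const a).div
        ((differentiableAt_id.const_mul _).const_add 1) hne)
    have hgd : DifferentiableOn ℂ g (ball 0 1) := by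
      intro z hz
      have h1 : DifferentiableAt ℂ σ z := hσd_at z hz
      have h2 : DifferentiableAt ℂ f (σ z) :=
        hd.differentiableAt (isOpen_ball.mem_nhds (hσmem z hz))
      have h3 : DifferentiableAt ℂ (fun w => f (σ w)) z := h2.comp z h1
      have hne := hden2 _ (hcon _ (hσmem z hz))
      exact (((h3.sub_const b).div ((h3.const_mul _).const_sub 1) hne)).differentiableWithinAt
    have hmaps : Set.MapsTo g (ball (0:ℂ) 1) (ball ((g 0):ℂ) 1) := by
      rw [hg0]; exact fun z hz => hgball z hz
    have hschwarz : ‖deriv g 0‖ ≤ 1 := by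
      have := Complex.norm_deriv_le_div_of_mapsTo_ball hgd (hmaps.mono_right ball_subset_closedBall) one_pos
      simpa using this
    have hσd : HasDerivAt σ (1 - a * (starRingEnd ℂ) a) 0 := by
      have h1 : HasDerivAt (fun w : ℂ => w + a) 1 0 := (hasDerivAt_id 0).add_const a
      have h2 : HasDerivAt (fun w : ℂ => 1 + (starRingEnd ℂ) a * w) ((starRingEnd ℂ) a) 0 := by
        simpa using ((hasDerivAt_id 0).const_mul ((starRingEnd ℂ) a)).const_add 1
      have h3 := h1.div h2 (by simpa using mobius_den_ne ha' (by simp : ‖(0:ℂ)‖ < 1))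
      simp at h3; exact h3
    have hfd : HasDerivAt f (deriv f a) a :=
      (hd.differentiableAt (isOpen_ball.mem_nhds ha)).hasDerivAt
    have hfσ : HasDerivAt (fun z => f (σ z)) (deriv f a * (1 - a * (starRingEnd ℂ) a)) 0 := by
      have hfd' : HasDerivAt f (deriv f a) (σ 0) := by rw [hσ0]; exact hfd
      have h2 := hfd'.comp 0 hσd
      exact h2
    set D₀ : ℂ := deriv f a * (1 - a * (starRingEnd ℂ) a) with hD₀
    have hnum : HasDerivAt (fun z => f (σ z) - b) D₀ 0 := hfσ.sub_const b
    have hden : HasDerivAt (fun z => 1 - (starRingEnd ℂ) b * f (σ z))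
        (-((starRingEnd ℂ) b * D₀)) 0 := by
      simpa using (hfσ.const_mul ((starRingEnd ℂ) b)).const_sub 1
    have hne0 : 1 - (starRingEnd ℂ) b * f (σ 0) ≠ 0 := hden2 _ (by rw [hσ0, ← hb_def]; exact hb)
    have hgderiv : HasDerivAt g
        ((D₀ * (1 - (starRingEnd ℂ) b * f (σ 0)) - (f (σ 0) - b) * -((starRingEnd ℂ) b * D₀)) /
          (1 - (starRingEnd ℂ) b * f (σ 0)) ^ 2) 0 := hnum.div hden hne0
    rw [hσ0, ← hb_def] at hgderiv
    have hbne : 1 - (starRingEnd ℂ) b * b ≠ 0 := by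
      rw [hb_def] at hne0 ⊢; rw [hσ0] at hne0; exact hne0
    have hval : deriv g 0 = D₀ / (1 - (starRingEnd ℂ) b * b) := by
      rw [hgderiv.deriv]
      field_simp
      ring
    rw [hval] at hschwarz
    rw [norm_div, norm_mul, abs_one_sub_conj_mul hb] at hschwarz
    have habsa : ‖1 - a * (starRingEnd ℂ) a‖ = 1 - ‖a‖ ^ 2 := by
      rw [mul_comm]; exact abs_one_sub_conj_mul ha'
    rw [habsa] at hschwarz
    have hbpos : 0 < 1 - ‖b‖ ^ 2 := by nlinarith [norm_nonneg b]
    rw [div_le_one hbpos] at hschwarz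
    exact hschwarz
  · push_neg at hcon
    obtain ⟨z₀, hz₀, hz₀1⟩ := hcon
    have heq1 : ‖f z₀‖ = 1 := le_antisymm (hm z₀ hz₀) hz₀1
    have hmax : IsMaxOn (norm ∘ f) (ball (0:ℂ) 1) z₀ := by
      intro z hz
      simp only [Function.comp, Set.mem_setOf_eq]
      rw [heq1]; exact hm z hz
    have hconst := Complex.eqOn_of_isPreconnected_of_isMaxOn_norm
      (convex_ball (0:ℂ) 1).isPreconnected isOpen_ball hd hz₀ hmax
    have hfa : f a = f z₀ := hconst ha
    have hderiv0 : deriv f a = 0 := by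
      have hev : f =ᶠ[nhds a] (fun _ => f z₀) :=
        Filter.eventuallyEq_of_mem (isOpen_ball.mem_nhds ha) (fun z hz => hconst hz)
      rw [hev.deriv_eq, deriv_const]
    rw [hderiv0, hfa, heq1]
    simp

lemma poly_key (t p α : ℝ) (ht0 : 0 ≤ t) (ht1 : t < 1) (hp0 : 0 ≤ p) (hp1 : p ≤ 1) (hα : 0 < α) :
    α*(1-p^2)*(1-t^2) + (α + α^2/2)*p^2*(1-t^2)^2 ≤ 2*α*(2+α)*(1-t*p)^2 := by
  have key : p*(1-t^2) ≤ 2*(1-t*p) := by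
    nlinarith [mul_nonneg hp0 (sq_nonneg (1-t)), sub_nonneg.2 hp1]
  have hkey0 : 0 ≤ p*(1-t^2) :=
    mul_nonneg hp0 (by nlinarith [mul_nonneg (sub_nonneg.2 ht1.le) (by linarith : (0:ℝ) ≤ 1+t)])
  have hg : 0 ≤ 2*(1-t*p)^2 - p^2*(1-t^2)^2/2 := by
    nlinarith [mul_self_le_mul_self hkey0 key]
  have h8 : 0 ≤ 8*t - t^2*(5-t^2)*(1+p) := by
    nlinarith [mul_nonneg (mul_nonneg ht0 (sub_nonneg.2 ht1.le))
        (show (0:ℝ) ≤ 4 - t - t^2 by nlinarith),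
      mul_nonneg (sub_nonneg.2 hp1) (mul_nonneg (sq_nonneg t) (by nlinarith : (0:ℝ) ≤ 5 - t^2))]
  have hf0 : 0 ≤ 4*(1-t*p)^2 - (1-p^2)*(1-t^2) - p^2*(1-t^2)^2 := by
    nlinarith [mul_nonneg (pow_nonneg (sub_nonneg.2 ht1.le) 3) (by linarith : (0:ℝ) ≤ t+3),
      mul_nonneg (sub_nonneg.2 hp1) h8]
  nlinarith [mul_nonneg hα.le hf0, mul_nonneg (mul_pos hα hα).le hg]

/-- The class `G(α)`: analytic functions `h` on the unit disk with `h(0) = 0`, `h'(0) = 1`,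
`h'(z) ≠ 0` on the disk, and `Re (z h''(z) / (α h'(z))) < 1/2` on the disk. -/
noncomputable def GClass (α : ℝ) (h : ℂ → ℂ) : Prop :=
  AnalyticOnNhd ℂ h (ball (0:ℂ) 1) ∧ h 0 = 0 ∧ deriv h 0 = 1 ∧
    (∀ z ∈ ball (0:ℂ) 1, deriv h z ≠ 0) ∧
    ∀ z ∈ ball (0:ℂ) 1, (z * deriv (deriv h) z / ((α : ℂ) * deriv h z)).re < 1/2

/-- The Schwarzian derivative `S_h = (h''/h')' - (1/2)(h''/h')²`. -/
noncomputable def schwarzian (h : ℂ → ℂ) : ℂ → ℂ := fun z =>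
  deriv (fun w => deriv (deriv h) w / deriv h w) z -
    (1 / 2) * (deriv (deriv h) z / deriv h z) ^ 2

set_option maxHeartbeats 1000000 in
theorem stmt_10 {α : ℝ} (hα0 : 0 < α) (hα1 : α ≤ 1) {h : ℂ → ℂ} (hG : GClass α h) :
    ∀ z ∈ ball (0:ℂ) 1,
      (1 - ‖z‖ ^ 2) ^ 2 * ‖schwarzian h z‖ ≤ 2 * α * (2 + α) := by
  obtain ⟨hA, -, -, hne, hre⟩ := hG
  have h0B : (0:ℂ) ∈ ball (0:ℂ) 1 := mem_ball_self one_pos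
  have hαne : (α:ℂ) ≠ 0 := ofReal_ne_zero.2 hα0.ne'
  set w : ℂ → ℂ := fun z => deriv (deriv h) z / deriv h z with hw_def
  have hwA : AnalyticOnNhd ℂ w (ball (0:ℂ) 1) := fun z hz =>
    ((hA.deriv.deriv) z hz).div ((hA.deriv) z hz) (hne z hz)
  clear_value w
  have hre' : ∀ z ∈ ball (0:ℂ) 1, (z * w z / (α:ℂ)).re < 1/2 := by
    intro z hz
    have h1 := hre z hz
    have hwz : w z = deriv (deriv h) z / deriv h z := by rw [hw_def]
    have heq : z * deriv (deriv h) z / ((α : ℂ) * deriv h z) = z * w z / (α:ℂ) := by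
      rw [div_mul_eq_div_div_swap, mul_div_assoc, hwz]
    rwa [heq] at h1
  have hq_ne : ∀ z ∈ ball (0:ℂ) 1, z * w z - (α:ℂ) ≠ 0 := by
    intro z hz hzero
    have hz1 : z * w z = (α:ℂ) := by linear_combination hzero
    have h2 := hre' z hz
    rw [hz1, div_self hαne] at h2
    norm_num at h2
  set ψ : ℂ → ℂ := fun z => z * w z / (z * w z - (α:ℂ)) with hψ_def
  have hψA : AnalyticOnNhd ℂ ψ (ball (0:ℂ) 1) := fun z hz =>
    ((analyticAt_id.mul (hwA z hz)).div
      ((analyticAt_id.mul (hwA z hz)).sub analyticAt_const) (hq_ne z hz))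
  have hψ0 : ψ 0 = 0 := by rw [hψ_def]; simp
  have hψz_eq : ∀ z : ℂ, ψ z = z * w z / (z * w z - (α:ℂ)) := fun z => by rw [hψ_def]
  clear_value ψ
  have hψlt : ∀ z ∈ ball (0:ℂ) 1, ‖ψ z‖ < 1 := by
    intro z hz
    have hne2 := hq_ne z hz
    rw [hψz_eq z, norm_div, div_lt_one (norm_pos_iff.mpr hne2)]
    have hre2 : (z * w z).re < α/2 := by
      have h3 := hre' z hz
      rw [Complex.div_ofReal_re, div_lt_div_iff₀ (by positivity) (by norm_num)] at h3
      linarith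
    refine lt_of_pow_lt_pow_left₀ 2 (norm_nonneg _) ?_
    rw [Complex.sq_norm, Complex.sq_norm, Complex.normSq_sub]
    have h4 : (z * w z * (starRingEnd ℂ) ((α:ℝ):ℂ)).re = (z * w z).re * α := by
      rw [Complex.conj_ofReal]
      simp [Complex.mul_re]
    have h5 : Complex.normSq ((α:ℝ):ℂ) = α^2 := by
      rw [Complex.normSq_ofReal]; ring
    rw [h4, h5]
    nlinarith
  set φ : ℂ → ℂ := dslope ψ 0 with hφ_def
  have hφd : DifferentiableOn ℂ φ (ball (0:ℂ) 1) :=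
    (Complex.differentiableOn_dslope (isOpen_ball.mem_nhds h0B)).mpr hψA.differentiableOn
  have hφle : ∀ z ∈ ball (0:ℂ) 1, ‖φ z‖ ≤ 1 := by
    intro z hz
    have hmaps : Set.MapsTo ψ (ball (0:ℂ) 1) (ball (ψ 0) 1) := by
      rw [hψ0]
      exact fun u hu => mem_ball_zero_iff.2 (hψlt u hu)
    have := Complex.norm_dslope_le_div_of_mapsTo_ball hψA.differentiableOn (hmaps.mono_right ball_subset_closedBall) hz
    simpa [hφ_def] using this
  have hφ0_eq : φ 0 = deriv ψ 0 := by rw [hφ_def, dslope_same]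
  have hφz_eq : ∀ z : ℂ, z ≠ 0 → φ z = ψ z / z := by
    intro z hz0
    rw [hφ_def, dslope_of_ne _ hz0, slope_def_field, hψ0, sub_zero, sub_zero]
  clear_value φ
  have hzφ_ne : ∀ z ∈ ball (0:ℂ) 1, z * φ z - 1 ≠ 0 := by
    intro z hz hzero
    have habs : ‖z * φ z‖ < 1 := by
      rw [norm_mul]
      calc ‖z‖ * ‖φ z‖ ≤ ‖z‖ * 1 :=
            mul_le_mul_of_nonneg_left (hφle z hz) (norm_nonneg z)
        _ = ‖z‖ := mul_one _
        _ < 1 := mem_ball_zero_iff.1 hz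
    have h1 : z * φ z = 1 := by linear_combination hzero
    rw [h1] at habs
    simp at habs
  have identity : ∀ z ∈ ball (0:ℂ) 1, w z = (α:ℂ) * φ z / (z * φ z - 1) := by
    intro z hz
    by_cases hz0 : z = 0
    · subst hz0
      have hw0 : DifferentiableAt ℂ w 0 := (hwA 0 h0B).differentiableAt
      have hqd : HasDerivAt (fun u : ℂ => u * w u) (w 0) 0 := by
        have := (hasDerivAt_id (0:ℂ)).mul hw0.hasDerivAt
        simp at this; exact this
      have hψd : HasDerivAt ψ
          ((w 0 * ((0:ℂ) * w 0 - (α:ℂ)) - (0:ℂ) * w 0 * w 0) / ((0:ℂ) * w 0 - (α:ℂ))^2) 0 := by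
        have := hqd.div (hqd.sub_const ((α:ℂ))) (hq_ne 0 h0B)
        refine this.congr_of_eventuallyEq ?_
        filter_upwards with u
        rw [hψz_eq u]; rfl
      have hφ0 : φ 0 = -(w 0) / (α:ℂ) := by
        rw [hφ0_eq, hψd.deriv]
        rw [div_eq_div_iff (pow_ne_zero 2 (hq_ne 0 h0B)) hαne]
        ring
      rw [hφ0]
      field_simp
      simp
      rw [div_neg, neg_neg, mul_div_cancel_right₀ _ hαne]
    · have hq := hq_ne z hz
      have hD := hzφ_ne z hz
      have hφz : φ z = (z * w z / (z * w z - (α:ℂ))) / z := by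
        rw [hφz_eq z hz0, hψz_eq z]
      rw [eq_div_iff hD, hφz]
      field_simp
      have hq' : w z * z - (α:ℂ) ≠ 0 := by rwa [mul_comm]
      field_simp
      ring
  intro z hz
  have hφdz : DifferentiableAt ℂ φ z := hφd.differentiableAt (isOpen_ball.mem_nhds hz)
  have hD := hzφ_ne z hz
  have hev : w =ᶠ[nhds z] (fun ζ => (α:ℂ) * φ ζ / (ζ * φ ζ - 1)) :=
    Filter.eventuallyEq_of_mem (isOpen_ball.mem_nhds hz) (fun u hu => identity u hu)
  have hnum : HasDerivAt (fun ζ => (α:ℂ) * φ ζ) ((α:ℂ) * deriv φ z) z :=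
    hφdz.hasDerivAt.const_mul _
  have hden : HasDerivAt (fun ζ => ζ * φ ζ - 1) (1 * φ z + z * deriv φ z) z :=
    ((hasDerivAt_id z).mul hφdz.hasDerivAt).sub_const 1
  have hwderiv : deriv w z =
      ((α:ℂ) * deriv φ z * (z * φ z - 1) - (α:ℂ) * φ z * (1 * φ z + z * deriv φ z)) /
        (z * φ z - 1)^2 := by
    rw [hev.deriv_eq]
    exact (hnum.div hden hD).deriv
  have hS : schwarzian h z =
      -((α:ℂ) * deriv φ z + ((α:ℂ) + (α:ℂ)^2/2) * (φ z)^2) / (z * φ z - 1)^2 := by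
    have h1 : schwarzian h z = deriv w z - (1/2) * (w z)^2 := by rw [hw_def]; rfl
    rw [h1, hwderiv, identity z hz]
    field_simp
    ring
  set t := ‖z‖ with ht_def
  set p := ‖φ z‖ with hp_def
  set s := ‖deriv φ z‖ with hs_def
  have ht1 : t < 1 := mem_ball_zero_iff.1 hz
  have ht0 : 0 ≤ t := norm_nonneg z
  have hp1 : p ≤ 1 := hφle z hz
  have hp0 : 0 ≤ p := norm_nonneg _
  have hs0 : 0 ≤ s := norm_nonneg _
  have hpick : s * (1 - t^2) ≤ 1 - p^2 := schwarz_pick hφd hφle hz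
  have hDlb : 1 - t*p ≤ ‖z * φ z - 1‖ := by
    calc 1 - t*p = ‖(1:ℂ)‖ - ‖z * φ z‖ := by
          simp [norm_mul, ht_def, hp_def]
      _ ≤ ‖(1:ℂ) - z * φ z‖ := norm_sub_norm_le _ _
      _ = ‖z * φ z - 1‖ := by
          rw [← norm_neg]
          congr 1
          ring
  clear_value t p s
  have htp : t*p < 1 := by nlinarith
  have htp0 : 0 < 1 - t*p := by linarith
  have habsS : ‖schwarzian h z‖ ≤ (α*s + (α + α^2/2)*p^2) / (1 - t*p)^2 := by
    rw [hS, norm_div, norm_pow]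
    have hnum_le : ‖-((α:ℂ) * deriv φ z + ((α:ℂ) + (α:ℂ)^2/2) * (φ z)^2)‖ ≤
        α*s + (α + α^2/2)*p^2 := by
      rw [norm_neg]
      calc ‖(α:ℂ) * deriv φ z + ((α:ℂ) + (α:ℂ)^2/2) * (φ z)^2‖ ≤
            ‖(α:ℂ) * deriv φ z‖ +
              ‖((α:ℂ) + (α:ℂ)^2/2) * (φ z)^2‖ := norm_add_le _ _
        _ = α*s + (α + α^2/2)*p^2 := by
            rw [norm_mul, norm_mul, norm_pow]
            have hc : ((α:ℂ) + (α:ℂ)^2/2) = ((α + α^2/2 : ℝ) : ℂ) := by push_cast; ring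
            rw [hc, Complex.norm_real, Complex.norm_real, Real.norm_eq_abs, Real.norm_eq_abs, ← hs_def, ← hp_def]
            rw [_root_.abs_of_nonneg hα0.le,
              _root_.abs_of_nonneg (by nlinarith : (0:ℝ) ≤ α + α^2/2)]
    have hden_ge : (1 - t*p)^2 ≤ ‖z * φ z - 1‖ ^ 2 := by
      nlinarith [norm_nonneg (z * φ z - 1)]
    have hN0 : (0:ℝ) ≤ α*s + (α + α^2/2)*p^2 := by
      nlinarith [mul_nonneg hα0.le hs0,
        mul_nonneg (by nlinarith : (0:ℝ) ≤ α + α^2/2) (sq_nonneg p)]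
    exact div_le_div₀ hN0 hnum_le (pow_pos htp0 2) hden_ge
  have hkey := poly_key t p α ht0 ht1 hp0 hp1 hα0
  have h6 : (1-t^2)^2 * (α*s + (α+α^2/2)*p^2) ≤ 2*α*(2+α)*(1-t*p)^2 := by
    have hint := mul_le_mul_of_nonneg_left hpick
      (mul_nonneg hα0.le (by nlinarith : (0:ℝ) ≤ 1 - t^2))
    nlinarith [hint, hkey]
  calc (1 - t^2)^2 * ‖schwarzian h z‖ ≤
        (1-t^2)^2 * ((α*s + (α+α^2/2)*p^2)/(1-t*p)^2) :=
        mul_le_mul_of_nonneg_left habsS (sq_nonneg _)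
    _ ≤ 2*α*(2+α) := by
        rw [← mul_div_assoc, div_le_iff₀ (pow_pos htp0 2)]
        exact h6
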